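/- Let T be an ℝ-tree in which every point has at least 3 branches, and consider F = T × ℝ with the ℓ² product metric. For any two 2-flats (of the form α × ℝ with α a line in T) in F, there exists a third 2-flat intersecting each of them in a half-plane. -/

import Mathlib

open Set

/-- A geodesic space: any two points are joined by a geodesic segment. -/
def IsGeodesicSpace (X : Type*) [MetricSpace X] : Prop :=
  ∀ x y : X, ∃ g : ℝ → X, g 0 = x ∧ g (dist x y) = y ∧
    ∀ s ∈ Icc (0 : ℝ) (dist x y), ∀ t ∈ Icc (0 : ℝ) (dist x y),
      dist (g s) (g t) = |s - t|

/-- An `ℝ`-tree: a geodesic metric space which is `0`-hyperbolic. -/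
def IsRTree (X : Type*) [MetricSpace X] : Prop :=
  IsGeodesicSpace X ∧ ∀ x y z w : X,
    dist x y + dist z w ≤ max (dist x z + dist y w) (dist x w + dist y z)

/-- Every point of `T` is a branch point (at least 3 branches). -/
def EverywhereBranching (T : Type*) [MetricSpace T] : Prop :=
  ∀ p : T, ∃ x y z : T, dist p x = 1 ∧ dist p y = 1 ∧ dist p z = 1 ∧
    dist x y = 2 ∧ dist y z = 2 ∧ dist x z = 2

/-- A geodesic line: an isometric embedding of `ℝ`. -/
def GeodesicLine {X : Type*} [MetricSpace X] (α : ℝ → X) : Prop :=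
  ∀ s t : ℝ, dist (α s) (α t) = |s - t|

open Set

section Helpers
variable {T : Type*} [MetricSpace T]

lemma GL.inj {α : ℝ → T} (hα : GeodesicLine α) : Function.Injective α := by
  intro s t h
  have := hα s t
  rw [h, dist_self] at this
  have : s - t = 0 := by
    have h2 := abs_eq_zero.mp this.symm
    exact h2
  linarith

lemma GL.cont {α : ℝ → T} (hα : GeodesicLine α) : Continuous α := by
  have : LipschitzWith 1 α := by
    apply LipschitzWith.of_dist_le_mul
    intro s t
    rw [hα s t, Real.dist_eq]
    simp
  exact this.continuous

lemma GL.neg {α : ℝ → T} (hα : GeodesicLine α) : GeodesicLine (fun t => α (-t)) := by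
  intro s t
  rw [hα (-s) (-t)]
  rw [show -s - -t = -(s - t) by ring, abs_neg]

lemma GL.closed_range {α : ℝ → T} (hα : GeodesicLine α) : IsClosed (range α) := by
  apply IsSeqClosed.isClosed
  intro xs p hmem htend
  choose s hs using hmem
  have hc : CauchySeq xs := htend.cauchySeq
  have hcs : CauchySeq s := by
    rw [Metric.cauchySeq_iff] at hc ⊢
    intro ε hε
    obtain ⟨N, hN⟩ := hc ε hε
    refine ⟨N, fun m hm n hn => ?_⟩
    have := hN m hm n hn
    rwa [← hs m, ← hs n, hα, ← Real.dist_eq] at this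
  obtain ⟨l, hl⟩ := cauchySeq_tendsto_of_complete hcs
  have : Filter.Tendsto xs Filter.atTop (nhds (α l)) := by
    have := ((GL.cont hα).continuousAt (x := l)).tendsto.comp hl
    convert this using 1
    ext n; rw [← hs n]; rfl
  exact ⟨l, tendsto_nhds_unique this htend⟩

/-- uniqueness of intermediate points in 0-hyperbolic spaces -/
lemma btw_unique (hT : IsRTree T) {x y m m' : T}
    (hd : dist x m = dist x m')
    (h : dist x m + dist m y = dist x y)
    (h' : dist x m' + dist m' y = dist x y) : m = m' := by
  have h4 := hT.2 x y m m'
  have hmm : dist m m' ≤ 0 := by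
    rcases le_max_iff.mp h4 with h5 | h5
    · rw [dist_comm y m'] at h5
      linarith
    · rw [dist_comm y m] at h5
      linarith
  exact dist_le_zero.mp hmm

/-- transitivity of betweenness in 0-hyperbolic spaces -/
lemma btw_trans (hT : IsRTree T) {a b c d : T} (hbc : b ≠ c)
    (h1 : dist a b + dist b c = dist a c)
    (h2 : dist b c + dist c d = dist b d) :
    dist a d = dist a b + dist b c + dist c d := by
  have h4 := hT.2 a c b d
  have hbc' : 0 < dist b c := dist_pos.mpr hbc
  have hge : dist a b + dist b c + dist c d ≤ dist a d := by
    rcases le_max_iff.mp h4 with h5 | h5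
    · exfalso
      linarith
    · rw [dist_comm c b] at h5
      linarith
  have hle : dist a d ≤ dist a b + dist b c + dist c d :=
    le_trans (dist_triangle a c d) (by linarith [dist_triangle a b c])
  linarith

end Helpers

section Proj
variable {T : Type*} [MetricSpace T]

lemma proj_one_sided (hT : IsRTree T) {α : ℝ → T} (hα : GeodesicLine α) (q : T) (c : ℝ)
    (hmin : ∀ t, dist q (α c) ≤ dist q (α t)) :
    ∀ u, c ≤ u → dist q (α u) = dist q (α c) + (u - c) := by
  intro u hcu
  have hle : dist q (α u) ≤ dist q (α c) + (u - c) := by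
    have := dist_triangle q (α c) (α u)
    rw [hα c u] at this
    rw [abs_of_nonpos (by linarith)] at this
    linarith
  rcases eq_or_lt_of_le hcu with h | hlt
  · subst h; simp
  refine le_antisymm hle ?_
  by_contra hcon
  push_neg at hcon
  set f : ℝ → ℝ := fun t => dist q (α t) with hfdef
  have hfc : ∀ t, f t = dist q (α t) := fun _ => rfl
  set e : ℝ := (f u - f c + (u - c)) / 2 with he
  have h1 : 0 < e := by
    have := hmin u
    simp only [← hfc] at this ⊢
    rw [he]
    have : f c ≤ f u := this
    linarith
  have h2 : e < u - c := by
    rw [he]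
    simp only [← hfc] at hcon
    linarith
  set t : ℝ := u - e with ht
  have hct : c < t := by rw [ht]; linarith
  have htu : t < u := by rw [ht]; linarith
  have h4 := hT.2 (α c) (α u) q (α t)
  rw [hα c u, hα u t, hα c t, dist_comm (α c) q, dist_comm (α u) q] at h4
  rw [abs_of_nonpos (by linarith), abs_of_nonneg (by linarith), abs_of_nonpos (by linarith)] at h4
  simp only [← hfc] at h4 hcon
  have hfcu := hmin t
  simp only [← hfc] at hfcu
  rcases le_max_iff.mp h4 with h5 | h5
  · linarith
  · have : f c + (u - t) ≤ f u := by linarith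
    rw [ht] at this
    rw [he] at this
    linarith

lemma exists_proj (hT : IsRTree T) {α : ℝ → T} (hα : GeodesicLine α) (q : T) :
    ∃ c, ∀ s, dist q (α s) = |s - c| + dist q (α c) := by
  set f : ℝ → ℝ := fun t => dist q (α t) with hfdef
  have hfc : ∀ t, f t = dist q (α t) := fun _ => rfl
  have hlow : ∀ t, |t| - f 0 ≤ f t := by
    intro t
    have := dist_triangle (α t) q (α 0)
    rw [dist_comm (α t) q] at this
    have h2 : dist (α t) (α 0) = |t| := by rw [hα t 0]; simp
    simp only [← hfc] at this
    linarith [this, h2.symm.le, h2.ge, h2.le]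
  have hcont : Continuous f := continuous_const.dist (GL.cont hα)
  have hf0 : 0 ≤ f 0 := dist_nonneg
  set K := Icc (-(2 * f 0 + 1)) (2 * f 0 + 1) with hK
  have h0K : (0:ℝ) ∈ K := by rw [hK, mem_Icc]; constructor <;> linarith
  obtain ⟨c, hcK, hcmin⟩ := isCompact_Icc.exists_isMinOn ⟨0, h0K⟩ hcont.continuousOn
  have hmin : ∀ t, f c ≤ f t := by
    intro t
    by_cases htK : t ∈ K
    · exact hcmin htK
    · have habs : 2 * f 0 + 1 < |t| := by
        simp only [hK, mem_Icc, not_and_or, not_le] at htK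
        rcases htK with h | h
        · rw [abs_of_nonpos (by linarith)]; linarith
        · rw [abs_of_nonneg (by linarith)]; linarith
      have h1 : f c ≤ f 0 := hcmin h0K
      have h2 := hlow t
      linarith
  have hright := proj_one_sided hT hα q c hmin
  have hleft : ∀ u, u ≤ c → dist q (α u) = dist q (α c) + (c - u) := by
    have hα' : GeodesicLine (fun t => α (-t)) := GL.neg hα
    have hmin' : ∀ t, dist q ((fun t => α (-t)) (-c)) ≤ dist q ((fun t => α (-t)) t) := by
      intro t
      simp only [neg_neg]
      exact hmin (-t)
    have := proj_one_sided hT hα' q (-c) hmin'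
    intro u hu
    have h2 := this (-u) (by linarith)
    simp only [neg_neg] at h2
    rw [h2]; ring
  refine ⟨c, fun s => ?_⟩
  rcases le_total s c with h | h
  · rw [hleft s h, abs_of_nonpos (by linarith)]; ring
  · rw [hright s h, abs_of_nonneg (by linarith)]; ring

end Proj

section Rigid
variable {T : Type*} [MetricSpace T]

lemma seg_rigid (hT : IsRTree T) {α β : ℝ → T} (hα : GeodesicLine α) (hβ : GeodesicLine β)
    {t₁ t₂ s₁ s₂ : ℝ} (h1 : β t₁ = α s₁) (h2 : β t₂ = α s₂) (hlt : t₁ < t₂) :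
    ∃ ε : ℝ, (ε = 1 ∨ ε = -1) ∧ s₂ = s₁ + ε * (t₂ - t₁) ∧
      ∀ t, t₁ ≤ t → t ≤ t₂ → β t = α (s₁ + ε * (t - t₁)) := by
  have habs : |s₁ - s₂| = t₂ - t₁ := by
    have h := hα s₁ s₂
    have h' := hβ t₁ t₂
    rw [h1, h2, h] at h'
    rw [h', abs_sub_comm, abs_of_nonneg (by linarith)]
  have hkey : ∀ ε : ℝ, |ε| = 1 → s₂ = s₁ + ε * (t₂ - t₁) →
      ∀ t, t₁ ≤ t → t ≤ t₂ → β t = α (s₁ + ε * (t - t₁)) := by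
    intro ε hε hs t ht1 ht2
    apply btw_unique (x := β t₁) (y := β t₂) hT
    · rw [hβ t₁ t, h1, hα]
      have : s₁ - (s₁ + ε * (t - t₁)) = ε * (t₁ - t) := by ring
      rw [this, abs_mul, hε, one_mul, abs_sub_comm]
    · rw [hβ t₁ t, hβ t t₂, hβ t₁ t₂]
      rw [abs_of_nonpos (by linarith), abs_of_nonpos (by linarith), abs_of_nonpos (by linarith)]
      ring
    · rw [h1, h2, hα, hα, hα]
      have e1 : s₁ - (s₁ + ε * (t - t₁)) = ε * (t₁ - t) := by ring
      have e2 : s₁ + ε * (t - t₁) - s₂ = ε * (t - t₂) := by rw [hs]; ring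
      have e3 : s₁ - s₂ = ε * (t₁ - t₂) := by rw [hs]; ring
      rw [e1, e2, e3, abs_mul, abs_mul, abs_mul, hε, one_mul, one_mul, one_mul]
      rw [abs_of_nonpos (by linarith), abs_of_nonpos (by linarith), abs_of_nonpos (by linarith)]
      ring
  rcases (abs_eq (by linarith : (0:ℝ) ≤ t₂ - t₁)).mp habs with hs | hs
  · exact ⟨-1, Or.inr rfl, by linarith, hkey (-1) (by norm_num) (by linarith)⟩
  · exact ⟨1, Or.inl rfl, by linarith, hkey 1 (by norm_num) (by linarith)⟩

/-- If `t₁` is a lower bound for the contact set and `β t₁ = α s₁`, then for `t ≤ t₁`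
the geodesic from `β t` to any point of `α` passes through `α s₁`. -/
lemma exit_proj (hT : IsRTree T) {α β : ℝ → T} (hα : GeodesicLine α) (hβ : GeodesicLine β)
    {t₁ s₁ : ℝ} (h1 : β t₁ = α s₁) (hlow : ∀ t', β t' ∈ range α → t₁ ≤ t')
    {t : ℝ} (ht : t ≤ t₁) : ∀ s, dist (β t) (α s) = |s - s₁| + (t₁ - t) := by
  obtain ⟨c, hc⟩ := exists_proj hT hα (β t)
  set D := dist (β t) (α c) with hD
  have hts : |s₁ - c| + D = t₁ - t := by
    have := hc s₁
    rw [← h1] at this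
    rw [hβ t t₁, abs_of_nonpos (by linarith)] at this
    linarith
  by_cases hcs : c = s₁
  · intro s
    rw [hc s, hcs]
    subst hcs
    simp at hts
    rw [hts]
  · exfalso
    have hδ : 0 < |s₁ - c| := by
      rw [abs_pos]
      intro h; apply hcs; linarith [sub_eq_zero.mp h]
    have hDpos : 0 ≤ D := dist_nonneg
    have hkey : α c = β (t₁ - |s₁ - c|) := by
      apply btw_unique (x := β t₁) (y := β t) hT
      · rw [hβ t₁ (t₁ - |s₁ - c|), h1, hα]
        rw [show t₁ - (t₁ - |s₁ - c|) = |s₁ - c| by ring, abs_abs]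
      · rw [hβ t₁ t, h1, hα, dist_comm (α c) (β t), hc c]
        rw [abs_of_nonneg (show (0:ℝ) ≤ t₁ - t by linarith)]
        have : |c - c| = 0 := by simp
        rw [this]
        linarith
      · rw [hβ t₁ (t₁ - |s₁ - c|), hβ (t₁ - |s₁ - c|) t, hβ t₁ t]
        rw [show t₁ - (t₁ - |s₁ - c|) = |s₁ - c| by ring, abs_abs]
        rw [abs_of_nonneg (show (0:ℝ) ≤ t₁ - |s₁ - c| - t by linarith),
          abs_of_nonneg (show (0:ℝ) ≤ t₁ - t by linarith)]
        linarith
    have := hlow (t₁ - |s₁ - c|) ⟨c, hkey⟩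
    linarith

lemma exit_proj' (hT : IsRTree T) {α β : ℝ → T} (hα : GeodesicLine α) (hβ : GeodesicLine β)
    {t₂ s₂ : ℝ} (h2 : β t₂ = α s₂) (hhigh : ∀ t', β t' ∈ range α → t' ≤ t₂)
    {t : ℝ} (ht : t₂ ≤ t) : ∀ s, dist (β t) (α s) = |s - s₂| + (t - t₂) := by
  have hβ' : GeodesicLine (fun u => β (-u)) := GL.neg hβ
  have h1' : (fun u => β (-u)) (-t₂) = α s₂ := by simpa using h2
  have hlow' : ∀ t', (fun u => β (-u)) t' ∈ range α → -t₂ ≤ t' := by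
    intro t' h
    have := hhigh (-t') h
    linarith
  have := exit_proj hT hα hβ' h1' hlow' (t := -t) (by linarith)
  intro s
  have h3 := this s
  simp only [neg_neg] at h3
  rw [h3]
  ring
end Rigid

section Branch
variable {T : Type*} [MetricSpace T]

lemma branch_pair (hT : IsRTree T) {p x y g : T} (hx : dist p x = 1) (hy : dist p y = 1)
    (hxy : dist x y = 2) (hg : dist g p = 1) : dist g x = 2 ∨ dist g y = 2 := by
  by_contra h
  push_neg at h
  obtain ⟨h1, h2⟩ := h
  have hgx : dist g x ≤ 2 := by
    calc dist g x ≤ dist g p + dist p x := dist_triangle _ _ _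
    _ = 2 := by rw [hg, hx]; norm_num
  have hgy : dist g y ≤ 2 := by
    calc dist g y ≤ dist g p + dist p y := dist_triangle _ _ _
    _ = 2 := by rw [hg, hy]; norm_num
  have hgx' : dist g x < 2 := lt_of_le_of_ne hgx h1
  have hgy' : dist g y < 2 := lt_of_le_of_ne hgy h2
  have h4 := hT.2 x y g p
  rw [hxy, hg, dist_comm x g, dist_comm y p, hy, dist_comm x p, hx, dist_comm y g] at h4
  rcases le_max_iff.mp h4 with h5 | h5 <;> linarith

lemma branch_step2 (hT : IsRTree T) (hbr : EverywhereBranching T) (p g₁ g₂ : T)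
    (h₁ : dist g₁ p = 1) (h₂ : dist g₂ p = 1) :
    ∃ w, dist p w = 1 ∧ dist g₁ w = 2 ∧ dist g₂ w = 2 := by
  obtain ⟨x, y, z, hx, hy, hz, hxy, hyz, hxz⟩ := hbr p
  by_cases hx1 : dist g₁ x = 2
  · by_cases hx2 : dist g₂ x = 2
    · exact ⟨x, hx, hx1, hx2⟩
    · have hy2 : dist g₂ y = 2 := by
        rcases branch_pair hT hx hy hxy h₂ with h | h
        · exact absurd h hx2
        · exact h
      have hz2 : dist g₂ z = 2 := by
        rcases branch_pair hT hx hz hxz h₂ with h | h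
        · exact absurd h hx2
        · exact h
      rcases branch_pair hT hy hz hyz h₁ with h | h
      · exact ⟨y, hy, h, hy2⟩
      · exact ⟨z, hz, h, hz2⟩
  · have hy1 : dist g₁ y = 2 := by
      rcases branch_pair hT hx hy hxy h₁ with h | h
      · exact absurd h hx1
      · exact h
    have hz1 : dist g₁ z = 2 := by
      rcases branch_pair hT hx hz hxz h₁ with h | h
      · exact absurd h hx1
      · exact h
    rcases branch_pair hT hy hz hyz h₂ with h | h
    · exact ⟨y, hy, hy1, h⟩
    · exact ⟨z, hz, hz1, h⟩

/-- A geodesic line which coincides with `α` on `Iic 0` and branches away from it. -/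
lemma branch_ray (hT : IsRTree T) (hbr : EverywhereBranching T) {α : ℝ → T}
    (hα : GeodesicLine α) :
    ∃ γ : ℝ → T, GeodesicLine γ ∧ (∀ u, u ≤ 0 → γ u = α u) ∧
      (∀ s u, 0 ≤ u → dist (α s) (γ u) = |s| + u) := by
  classical
  set Good : ℕ → T → Prop := fun n w => ∀ s, dist (α s) w = |s| + n with hGood
  -- base pair
  have hd1 : dist (α (-1)) (α 0) = 1 := by rw [hα]; norm_num
  have hd2 : dist (α 1) (α 0) = 1 := by rw [hα]; norm_num
  obtain ⟨p1, hp1, hp1a, hp1b⟩ := branch_step2 hT hbr (α 0) (α (-1)) (α 1) hd1 hd2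
  have hGood0 : Good 0 (α 0) := by
    intro s; rw [hα]; simp
  have hGood1 : Good 1 p1 := by
    intro s
    push_cast
    rcases le_total s 0 with hs | hs
    · rcases le_total s (-1) with hs' | hs'
      · have := btw_trans hT (b := α (-1)) (c := α 0)
          (a := α s) (d := p1) ?_ ?_ ?_
        · rw [this, hα s (-1), hd1, hp1]
          rw [abs_of_nonpos (by linarith : s - -1 ≤ 0), abs_of_nonpos hs]
          ring
        · intro h
          have := GL.inj hα h
          norm_num at this
        · rw [hα s (-1), hd1, hα s 0]
          rw [abs_of_nonpos (by linarith : s - -1 ≤ 0), abs_of_nonpos (by linarith : s - 0 ≤ 0)]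
          ring
        · rw [hd1, hp1, hp1a]
          norm_num
      · apply le_antisymm
        · have h1 := dist_triangle (α s) (α 0) p1
          rw [hα s 0, hp1, sub_zero] at h1
          linarith
        · have htri := dist_triangle (α (-1)) (α s) p1
          rw [hp1a, hα (-1) s] at htri
          rw [abs_of_nonpos (by linarith : (-1:ℝ) - s ≤ 0)] at htri
          rw [abs_of_nonpos hs]
          linarith
    · rcases le_total 1 s with hs' | hs'
      · have := btw_trans hT (b := α 1) (c := α 0)
          (a := α s) (d := p1) ?_ ?_ ?_
        · rw [this, hα s 1, hd2, hp1]
          rw [abs_of_nonneg (by linarith : (0:ℝ) ≤ s - 1), abs_of_nonneg hs]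
          ring
        · intro h
          have := GL.inj hα h
          norm_num at this
        · rw [hα s 1, hd2, hα s 0]
          rw [abs_of_nonneg (by linarith : (0:ℝ) ≤ s - 1), abs_of_nonneg (by linarith : (0:ℝ) ≤ s - 0)]
          ring
        · rw [hd2, hp1, hp1b]
          norm_num
      · apply le_antisymm
        · have h1 := dist_triangle (α s) (α 0) p1
          rw [hα s 0, hp1, sub_zero] at h1
          linarith
        · have htri := dist_triangle (α 1) (α s) p1
          rw [hp1b, hα 1 s] at htri
          rw [abs_of_nonneg (by linarith : (0:ℝ) ≤ (1:ℝ) - s)] at htri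
          rw [abs_of_nonneg hs]
          linarith
  -- recursive sequence
  set next : T × T → T := fun pr =>
    if h : dist pr.1 pr.2 = 1 then Classical.choose (branch_step2 hT hbr pr.2 pr.1 pr.1 h h)
    else pr.2 with hnext
  set P : ℕ → T × T := fun n => Nat.rec ((α 0), p1) (fun _ pr => (pr.2, next pr)) n with hP
  have hPsucc : ∀ n, P (n + 1) = ((P n).2, next (P n)) := fun n => rfl
  have hInv : ∀ n, dist (P n).1 (P n).2 = 1 ∧ Good n (P n).1 ∧ Good (n+1) (P n).2 := by
    intro n
    induction n with
    | zero => exact ⟨hp1, hGood0, hGood1⟩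
    | succ k ih =>
      obtain ⟨ihd, ihg1, ihg2⟩ := ih
      rw [hPsucc k]
      have hspec := Classical.choose_spec (branch_step2 hT hbr (P k).2 (P k).1 (P k).1 ihd ihd)
      have hnexteq : next (P k) = Classical.choose (branch_step2 hT hbr (P k).2 (P k).1 (P k).1 ihd ihd) := by
        rw [hnext]
        simp only [dif_pos ihd]
      obtain ⟨hw1, hw2, _⟩ := hspec
      rw [← hnexteq] at hw1 hw2
      have hGoodw : Good (k + 2) (next (P k)) := by
        intro s
        have := btw_trans hT (a := α s) (b := (P k).1) (c := (P k).2) (d := next (P k))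
          ?_ ?_ ?_
        · rw [this, ihg1 s, ihd, hw1]
          push_cast; ring
        · intro h; rw [h] at ihd; simp at ihd
        · rw [ihg1 s, ihg2 s, ihd]; push_cast; ring
        · rw [ihd, hw1, hw2]; norm_num
      exact ⟨hw1, ihg2, hGoodw⟩
  set p : ℕ → T := fun n => (P n).1 with hp
  have hpGood : ∀ n, Good n (p n) := fun n => (hInv n).2.1
  have hpd : ∀ n, dist (p n) (p (n+1)) = 1 := by
    intro n
    show dist (P n).1 (P (n+1)).1 = 1
    rw [hPsucc n]
    exact (hInv n).1
  have hpdist : ∀ m n : ℕ, m ≤ n → dist (p m) (p n) = n - m := by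
    intro m n hmn
    have hub : ∀ k : ℕ, dist (p m) (p (m + k)) ≤ k := by
      intro k
      induction k with
      | zero => simp
      | succ j ih =>
        have h := dist_triangle (p m) (p (m+j)) (p (m+j+1))
        have h2 := hpd (m+j)
        rw [show m + (j+1) = m + j + 1 by ring]
        push_cast
        linarith
    obtain ⟨k, rfl⟩ := Nat.exists_eq_add_of_le hmn
    have h1 := hub k
    have h2 : (m + k : ℝ) ≤ 0 + m + dist (p m) (p (m + k)) := by
      have := dist_triangle (α 0) (p m) (p (m + k))
      rw [hpGood m 0, hpGood (m+k) 0] at this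
      simp at this
      push_cast at this ⊢
      linarith
    push_cast at h1 ⊢
    linarith
  -- geodesic segments
  have hseg : ∀ n : ℕ, ∃ g : ℝ → T, g 0 = p n ∧ g 1 = p (n+1) ∧
      ∀ u ∈ Icc (0:ℝ) 1, ∀ v ∈ Icc (0:ℝ) 1, dist (g u) (g v) = |u - v| := by
    intro n
    obtain ⟨g, hg0, hg1, hgd⟩ := hT.1 (p n) (p (n+1))
    rw [hpd n] at hg1 hgd
    exact ⟨g, hg0, hg1, hgd⟩
  choose G hG0 hG1 hGd using hseg
  set γ : ℝ → T := fun u => if u ≤ 0 then α u else G ⌊u⌋₊ (u - ⌊u⌋₊) with hγ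
  have hγneg : ∀ u, u ≤ 0 → γ u = α u := by
    intro u hu; rw [hγ]; simp only [if_pos hu]
  have hfloor : ∀ u : ℝ, 0 < u → (⌊u⌋₊ : ℝ) ≤ u ∧ u < ⌊u⌋₊ + 1 ∧ γ u = G ⌊u⌋₊ (u - ⌊u⌋₊) := by
    intro u hu
    refine ⟨Nat.floor_le hu.le, Nat.lt_floor_add_one u, ?_⟩
    rw [hγ]; simp only [if_neg (not_le.mpr hu)]
  have hF1 : ∀ s u, 0 ≤ u → dist (α s) (γ u) = |s| + u := by
    intro s u hu
    rcases eq_or_lt_of_le hu with h | hu'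
    · rw [hγneg u (le_of_eq h.symm), ← h, hα]
      simp
    · obtain ⟨hfl, hfu, hgu⟩ := hfloor u hu'
      set n := ⌊u⌋₊
      have hmem1 : u - n ∈ Icc (0:ℝ) 1 := ⟨by linarith, by linarith⟩
      have hd0 : dist (G n 0) (G n (u - n)) = u - n := by
        rw [hGd n 0 ⟨le_refl 0, by norm_num⟩ (u - n) hmem1]
        rw [abs_of_nonpos (by linarith)]; ring
      have hd1 : dist (G n (u - n)) (G n 1) = 1 - (u - n) := by
        rw [hGd n (u - n) hmem1 1 ⟨by norm_num, le_refl 1⟩]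
        rw [abs_of_nonpos (by linarith)]; ring
      rw [hgu]
      apply le_antisymm
      · calc dist (α s) (G n (u - n)) ≤ dist (α s) (p n) + dist (p n) (G n (u - n)) :=
              dist_triangle _ _ _
        _ = |s| + u := by rw [hpGood n s, ← hG0 n, hd0]; ring
      · have htri := dist_triangle (α s) (G n (u - n)) (p (n+1))
        rw [← hG1 n] at htri
        rw [hd1] at htri
        have h2 : dist (α s) (p (n+1)) = |s| + n + 1 := by rw [hpGood (n+1) s]; push_cast; ring
        rw [hG1 n] at htri
        rw [h2] at htri
        linarith
  have hF2 : ∀ u v, 0 < u → u ≤ v → dist (γ u) (γ v) ≤ v - u := by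
    intro u v hu huv
    have hv : 0 < v := lt_of_lt_of_le hu huv
    obtain ⟨hul, huu, hgu⟩ := hfloor u hu
    obtain ⟨hvl, hvu, hgv⟩ := hfloor v hv
    set n := ⌊u⌋₊
    set m := ⌊v⌋₊
    have hnm : n ≤ m := Nat.floor_le_floor huv
    rw [hgu, hgv]
    rcases eq_or_lt_of_le hnm with heq | hlt
    · rw [← heq]
      rw [hGd n (u - n) ⟨by linarith, by linarith⟩ (v - n) ⟨by rw [heq]; linarith, by rw [heq]; linarith⟩]
      rw [abs_of_nonpos (by linarith)]
      linarith
    · have hn1m : n + 1 ≤ m := hlt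
      have e1 : dist (G n (u - n)) (p (n+1)) = 1 - (u - n) := by
        rw [← hG1 n, hGd n (u - ↑n) ⟨by linarith, by linarith⟩ 1 ⟨by norm_num, le_refl 1⟩,
          abs_of_nonpos (by linarith)]
        ring
      have e2 : dist (p m) (G m (v - m)) = v - m := by
        rw [← hG0 m, hGd m 0 ⟨le_refl 0, by norm_num⟩ (v - ↑m) ⟨by linarith, by linarith⟩,
          abs_of_nonpos (by linarith)]
        ring
      have e3 : dist (p (n+1)) (p m) = (m:ℝ) - ((n:ℝ)+1) := by
        rw [hpdist (n+1) m hn1m]; push_cast; ring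
      have h := dist_triangle (G n (u - ↑n)) (p (n+1)) (G m (v - ↑m))
      have h2 := dist_triangle (p (n+1)) (p m) (G m (v - ↑m))
      rw [e1] at h
      rw [e2, e3] at h2
      push_cast at h h2 ⊢
      linarith
  refine ⟨γ, ?_, hγneg, hF1⟩
  -- geodesic line property
  have main : ∀ s t, s ≤ t → dist (γ s) (γ t) = t - s := by
    intro s t hst
    rcases le_or_gt t 0 with ht | ht
    · rw [hγneg s (le_trans hst ht), hγneg t ht, hα]
      rw [abs_of_nonpos (by linarith)]; ring
    · rcases le_or_gt s 0 with hs | hs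
      · rw [hγneg s hs]
        rw [hF1 s t ht.le]
        rw [abs_of_nonpos hs]; ring
      · apply le_antisymm (hF2 s t hs hst)
        have h1 := hF1 0 s hs.le
        have h2 := hF1 0 t ht.le
        simp at h1 h2
        have := dist_triangle (α 0) (γ s) (γ t)
        linarith
  intro s t
  rcases le_total s t with h | h
  · rw [main s t h, abs_of_nonpos (by linarith)]; ring
  · rw [dist_comm, main t s h, abs_of_nonneg (by linarith)]

end Branch

section CaseDisjoint
variable {T : Type*} [MetricSpace T]

lemma case_disjoint (hT : IsRTree T) {α β : ℝ → T} (hα : GeodesicLine α) (hβ : GeodesicLine β)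
    (hS : ∀ t, β t ∉ range α) :
    ∃ γ : ℝ → T, GeodesicLine γ ∧
      (∃ a, range γ ∩ range α = α '' Ici a ∨ range γ ∩ range α = α '' Iic a) ∧
      (∃ b, range γ ∩ range β = β '' Ici b ∨ range γ ∩ range β = β '' Iic b) := by
  classical
  obtain ⟨c₀, hc₀⟩ := exists_proj hT hα (β 0)
  obtain ⟨c₁, hc₁⟩ := exists_proj hT hβ (α c₀)
  set D := dist (α c₀) (β c₁) with hD
  have hDpos : 0 < D := by
    rw [hD, dist_pos]
    intro h
    exact hS c₁ ⟨c₀, h⟩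
  have hD0pos : 0 < dist (β 0) (α c₀) := by
    rw [dist_pos]
    intro h
    exact hS 0 ⟨c₀, h.symm⟩
  have hform : ∀ t s, dist (β t) (α s) = |s - c₀| + (|t - c₁| + D) := by
    intro t s
    obtain ⟨c', hc'⟩ := exists_proj hT hα (β t)
    have hcc : c' = c₀ := by
      by_contra hne
      set D' := dist (β t) (α c') with hD'
      set D₀ := dist (β 0) (α c₀) with hD₀
      have hΔ : 0 < |c₀ - c'| := by
        rw [abs_pos]
        intro h
        exact hne (by linarith [sub_eq_zero.mp h])
      have htot : dist (β 0) (β t) = D₀ + |c₀ - c'| + D' := by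
        have hb := btw_trans hT (a := β 0) (b := α c₀) (c := α c') (d := β t) ?_ ?_ ?_
        · rw [hb, ← hD₀, hα c₀ c', dist_comm (α c') (β t), ← hD']
        · intro h
          exact hne (GL.inj hα h).symm
        · rw [hα c₀ c', hc₀ c', abs_sub_comm c' c₀, ← hD₀]
          ring
        · rw [hα c₀ c', dist_comm (α c') (β t), ← hD', dist_comm (α c₀) (β t), hc' c₀]
      have habs : |t| = D₀ + |c₀ - c'| + D' := by
        have := hβ 0 t
        rw [show (0:ℝ) - t = -t by ring, abs_neg] at this
        rw [← this, htot]
      have hDpos' : (0:ℝ) ≤ D' := dist_nonneg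
      have ht0 : t ≠ 0 := by
        intro h
        rw [h] at habs
        simp at habs
        linarith
      have hbridge : α c₀ = β (if 0 < t then D₀ else -D₀) := by
        apply btw_unique (x := β 0) (y := β t) hT
        · rw [← hD₀, hβ]
          split_ifs with h
          · rw [show (0:ℝ) - D₀ = -D₀ by ring, abs_neg, abs_of_nonneg (le_of_lt hD0pos)]
          · rw [show (0:ℝ) - -D₀ = D₀ by ring, abs_of_nonneg (le_of_lt hD0pos)]
        · rw [← hD₀, dist_comm (α c₀) (β t), hc' c₀, hβ 0 t]
          rw [show (0:ℝ) - t = -t by ring, abs_neg, habs, abs_sub_comm c₀ c']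
          ring
        · rcases lt_or_gt_of_ne ht0 with h | h
          · rw [if_neg (show ¬ 0 < t by linarith)]
            have habs' : -t = D₀ + |c₀ - c'| + D' := by
              rw [← abs_of_nonpos (le_of_lt h)]; exact habs
            rw [hβ 0 (-D₀), hβ (-D₀) t, hβ 0 t]
            rw [show (0:ℝ) - -D₀ = D₀ by ring, abs_of_nonneg hD0pos.le]
            rw [abs_of_nonneg (show (0:ℝ) ≤ -D₀ - t by linarith)]
            rw [show (0:ℝ) - t = -t by ring, abs_of_nonneg (show (0:ℝ) ≤ -t by linarith)]
            linarith
          · rw [if_pos h]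
            have habs' : t = D₀ + |c₀ - c'| + D' := by
              rw [← abs_of_nonneg h.le]; exact habs
            rw [hβ 0 D₀, hβ D₀ t, hβ 0 t]
            rw [show (0:ℝ) - D₀ = -D₀ by ring, abs_neg, abs_of_nonneg hD0pos.le]
            rw [abs_of_nonpos (show D₀ - t ≤ 0 by linarith)]
            rw [show (0:ℝ) - t = -t by ring, abs_neg, abs_of_nonneg h.le]
            linarith
      exact hS _ ⟨c₀, hbridge⟩
    rw [hc' s, hcc]
    have : dist (β t) (α c₀) = |t - c₁| + D := by
      rw [dist_comm (β t) (α c₀), hc₁ t, hD]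
    rw [this]
  -- bridge segment
  obtain ⟨g, hg0, hgD, hgd⟩ := hT.1 (α c₀) (β c₁)
  rw [← hD] at hgD hgd
  set γ : ℝ → T := fun u => if u ≤ 0 then α (c₀ + u) else if u ≤ D then g u else β (c₁ + (u - D))
    with hγ
  have hγ1 : ∀ u, u ≤ 0 → γ u = α (c₀ + u) := by
    intro u hu; rw [hγ]; simp only [if_pos hu]
  have hγ2 : ∀ u, 0 < u → u ≤ D → γ u = g u := by
    intro u hu hu'; rw [hγ]; simp only [if_neg (not_le.mpr hu), if_pos hu']
  have hγ3 : ∀ u, D < u → γ u = β (c₁ + (u - D)) := by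
    intro u hu
    rw [hγ]; simp only [if_neg (not_le.mpr (lt_trans hDpos hu)), if_neg (not_le.mpr hu)]
  have hgα : ∀ u, 0 ≤ u → u ≤ D → dist (α c₀) (g u) = u := by
    intro u h1 h2
    rw [← hg0, hgd 0 ⟨le_refl 0, le_of_lt hDpos⟩ u ⟨h1, h2⟩, abs_of_nonpos (by linarith)]
    ring
  have hgβ : ∀ u, 0 ≤ u → u ≤ D → dist (g u) (β c₁) = D - u := by
    intro u h1 h2
    rw [← hgD, hgd u ⟨h1, h2⟩ D ⟨le_of_lt hDpos, le_refl D⟩, abs_of_nonpos (by linarith)]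
    ring
  have main : ∀ u v, u ≤ v → dist (γ u) (γ v) = v - u := by
    intro u v huv
    rcases le_or_gt u 0 with hu | hu
    · rw [hγ1 u hu]
      rcases le_or_gt v 0 with hv | hv
      · rw [hγ1 v hv, hα, abs_of_nonpos (by linarith)]; ring
      · rcases le_or_gt v D with hvD | hvD
        · rw [hγ2 v hv hvD]
          apply le_antisymm
          · have h1 := dist_triangle (α (c₀ + u)) (α c₀) (g v)
            rw [hα (c₀ + u) c₀, hgα v (le_of_lt hv) hvD] at h1
            rw [abs_of_nonpos (by linarith : c₀ + u - c₀ ≤ 0)] at h1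
            linarith
          · have h1 := dist_triangle (α (c₀ + u)) (g v) (β c₁)
            have h2 : dist (β c₁) (α (c₀ + u)) = |c₀ + u - c₀| + (|c₁ - c₁| + D) := hform c₁ (c₀ + u)
            rw [dist_comm (β c₁) (α (c₀ + u))] at h2
            rw [abs_of_nonpos (by linarith : c₀ + u - c₀ ≤ 0)] at h2
            simp only [sub_self, abs_zero] at h2
            rw [hgβ v (le_of_lt hv) hvD, h2] at h1
            linarith
        · rw [hγ3 v hvD]
          have h2 := hform (c₁ + (v - D)) (c₀ + u)
          rw [dist_comm] 
          rw [h2, abs_of_nonpos (by linarith : c₀ + u - c₀ ≤ 0),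
            abs_of_nonneg (by linarith : (0:ℝ) ≤ c₁ + (v - D) - c₁)]
          ring
    · rcases le_or_gt u D with huD | huD
      · rw [hγ2 u hu huD]
        rcases le_or_gt v D with hvD | hvD
        · rw [hγ2 v (lt_of_lt_of_le hu huv) hvD]
          rw [hgd u ⟨le_of_lt hu, huD⟩ v ⟨by linarith, hvD⟩, abs_of_nonpos (by linarith)]
          ring
        · rw [hγ3 v hvD]
          apply le_antisymm
          · have h1 := dist_triangle (g u) (β c₁) (β (c₁ + (v - D)))
            rw [hgβ u (le_of_lt hu) huD, hβ c₁ (c₁ + (v - D))] at h1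
            rw [abs_of_nonpos (by linarith : c₁ - (c₁ + (v - D)) ≤ 0)] at h1
            linarith
          · have h1 := dist_triangle (α c₀) (g u) (β (c₁ + (v - D)))
            have h2 := hform (c₁ + (v - D)) c₀
            rw [dist_comm (β (c₁ + (v - D))) (α c₀)] at h2
            simp only [sub_self, abs_zero] at h2
            rw [abs_of_nonneg (by linarith : (0:ℝ) ≤ c₁ + (v - D) - c₁)] at h2
            rw [hgα u (le_of_lt hu) huD, h2] at h1
            linarith
      · rw [hγ3 u huD, hγ3 v (lt_of_lt_of_le huD huv)]
        rw [hβ, abs_of_nonpos (by linarith)]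
        ring
  have hGL : GeodesicLine γ := by
    intro s t
    rcases le_total s t with h | h
    · rw [main s t h, abs_of_nonpos (by linarith)]; ring
    · rw [dist_comm, main t s h, abs_of_nonneg (by linarith)]
  refine ⟨γ, hGL, ⟨c₀, Or.inr ?_⟩, ⟨c₁, Or.inl ?_⟩⟩
  · ext x
    simp only [mem_inter_iff, mem_range, mem_image, mem_Iic]
    constructor
    · rintro ⟨⟨u, hu⟩, ⟨s, hs⟩⟩
      rcases le_or_gt u 0 with h | h
      · rw [hγ1 u h] at hu
        exact ⟨c₀ + u, by linarith, hu⟩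
      · rcases le_or_gt u D with h2 | h2
        · exfalso
          rw [hγ2 u h h2] at hu
          have e1 : dist (g u) (β c₁) = D - u := hgβ u (le_of_lt h) h2
          have e2 := hform c₁ s
          rw [dist_comm (β c₁) (α s)] at e2
          simp only [sub_self, abs_zero] at e2
          rw [hs, ← hu] at e2
          rw [e1] at e2
          have := abs_nonneg (s - c₀)
          linarith
        · exfalso
          rw [hγ3 u h2] at hu
          exact hS (c₁ + (u - D)) (by rw [hu]; exact ⟨s, hs⟩)
    · rintro ⟨s, hs1, hs2⟩
      refine ⟨⟨s - c₀, ?_⟩, ⟨s, hs2⟩⟩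
      rw [hγ1 (s - c₀) (by linarith), ← hs2]
      congr 1
      ring
  · ext x
    simp only [mem_inter_iff, mem_range, mem_image, mem_Ici]
    constructor
    · rintro ⟨⟨u, hu⟩, ⟨t, ht⟩⟩
      rcases le_or_gt u 0 with h | h
      · exfalso
        rw [hγ1 u h] at hu
        exact hS t (by rw [ht, ← hu]; exact ⟨c₀ + u, rfl⟩)
      · rcases le_or_gt u D with h2 | h2
        · have e1 : dist (α c₀) (g u) = u := hgα u (le_of_lt h) h2
          have e2 := hform t c₀
          simp only [sub_self, abs_zero] at e2
          rw [ht, ← hu, hγ2 u h h2, dist_comm (g u) (α c₀), e1] at e2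
          have h3 := abs_nonneg (t - c₁)
          have h4 : u = D := by linarith
          have h5 : |t - c₁| = 0 := by linarith
          have h6 : t = c₁ := by
            have := abs_eq_zero.mp h5
            linarith
          exact ⟨t, le_of_eq h6.symm, ht⟩
        · rw [hγ3 u h2] at hu
          refine ⟨c₁ + (u - D), by linarith, by rw [hu]⟩
    · rintro ⟨t, ht1, ht2⟩
      refine ⟨⟨D + (t - c₁), ?_⟩, ⟨t, ht2⟩⟩
      rcases eq_or_lt_of_le ht1 with h | h
      · rw [hγ2 (D + (t - c₁)) (by linarith) (by rw [← h]; simp), ← h]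
        simp only [sub_self, add_zero]
        rw [hgD, ← ht2, ← h]
      · rw [hγ3 (D + (t - c₁)) (by linarith), ← ht2]
        congr 1
        ring
end CaseDisjoint

section CaseLine
variable {T : Type*} [MetricSpace T]

lemma contact_interval (hT : IsRTree T) {α β : ℝ → T} (hα : GeodesicLine α)
    (hβ : GeodesicLine β) {t₁ t₂ t : ℝ} (h1 : β t₁ ∈ range α) (h2 : β t₂ ∈ range α)
    (h : t₁ ≤ t) (h' : t ≤ t₂) : β t ∈ range α := by
  rcases eq_or_lt_of_le (le_trans h h') with heq | hlt
  · have : t = t₂ := le_antisymm h' (heq ▸ h)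
    rw [this]; exact h2
  · obtain ⟨s₁, hs₁⟩ := h1
    obtain ⟨s₂, hs₂⟩ := h2
    obtain ⟨ε, hε, hs, hmid⟩ := seg_rigid hT hα hβ hs₁.symm hs₂.symm hlt
    exact ⟨_, (hmid t h h').symm⟩

lemma case_line (hT : IsRTree T) (hbr : EverywhereBranching T) {α β : ℝ → T}
    (hα : GeodesicLine α) (hβ : GeodesicLine β) (hall : ∀ t : ℝ, β t ∈ range α) :
    ∃ γ : ℝ → T, GeodesicLine γ ∧
      (∃ a, range γ ∩ range α = α '' Ici a ∨ range γ ∩ range α = α '' Iic a) ∧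
      (∃ b, range γ ∩ range β = β '' Ici b ∨ range γ ∩ range β = β '' Iic b) := by
  obtain ⟨s₀, hs₀⟩ := hall 0
  obtain ⟨s₁', hs₁'⟩ := hall 1
  obtain ⟨ε, hε, hs, hmid⟩ := seg_rigid hT hα hβ hs₀.symm hs₁'.symm one_pos
  have hε2 : ε * ε = 1 := by rcases hε with h | h <;> rw [h] <;> norm_num
  have hβα : ∀ t, β t = α (s₀ + ε * t) := by
    intro t
    rcases le_or_gt t 0 with ht | ht
    · rcases eq_or_lt_of_le ht with ht' | ht'
      · rw [ht', ← hs₀]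
        norm_num
      · obtain ⟨st, hst⟩ := hall t
        obtain ⟨ε', hε', hs', hmid'⟩ := seg_rigid hT hα hβ hst.symm hs₁'.symm (by linarith)
        have h0 : β 0 = α (st + ε' * (0 - t)) := hmid' 0 (by linarith) (by linarith)
        have h1 : β 1 = α (st + ε' * (1 - t)) := hmid' 1 (by linarith) (by linarith)
        have e0 : s₀ = st + ε' * (0 - t) := GL.inj hα (by rw [← h0, hs₀])
        have e1 : s₀ + ε * (1 - 0) = st + ε' * (1 - t) := by
          apply GL.inj hα
          rw [← h1, ← hs₁', hs]
        have r1 : ε' * (1 - t) - ε' * (0 - t) = ε' := by ring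
        have r2 : ε * (1 - 0) = ε := by ring
        have heps : ε' = ε := by linarith
        have hstv : st = s₀ + ε * t := by
          have r3 : ε * (0 - t) = -(ε * t) := by ring
          rw [heps] at e0
          linarith
        rw [← hst, hstv]
    · rcases le_or_gt t 1 with ht' | ht'
      · have h2 := hmid t (by linarith) ht'
        rw [h2]
        norm_num
      · obtain ⟨st, hst⟩ := hall t
        obtain ⟨ε', hε', hs', hmid'⟩ := seg_rigid hT hα hβ hs₀.symm hst.symm (by linarith)
        have h1 : β 1 = α (s₀ + ε' * (1 - 0)) := hmid' 1 (by linarith) (by linarith)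
        have e1 : s₀ + ε * (1 - 0) = s₀ + ε' * (1 - 0) := by
          apply GL.inj hα
          rw [← h1, ← hs₁', hs]
        have r1 : ε * (1 - 0) = ε := by ring
        have r2 : ε' * (1 - 0) = ε' := by ring
        have heps : ε' = ε := by linarith
        have h2 := hmid' t (by linarith) (le_refl t)
        rw [h2, heps]
        norm_num
  have hαβ : ∀ s, α s = β (ε * (s - s₀)) := by
    intro s
    rw [hβα (ε * (s - s₀))]
    congr 1
    have : ε * (ε * (s - s₀)) = (ε * ε) * (s - s₀) := by ring
    rw [this, hε2]
    ring
  obtain ⟨γ, hGL, hneg, hF1⟩ := branch_ray hT hbr hα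
  have int_α : range γ ∩ range α = α '' Iic 0 := by
    ext x
    simp only [mem_inter_iff, mem_range, mem_image, mem_Iic]
    constructor
    · rintro ⟨⟨u, hu⟩, ⟨s, hsx⟩⟩
      rcases le_or_gt u 0 with h | h
      · rw [hneg u h] at hu
        exact ⟨u, h, hu⟩
      · exfalso
        have := hF1 s u h.le
        rw [hu, hsx, dist_self] at this
        have := abs_nonneg s
        linarith
    · rintro ⟨s, hs1, hs2⟩
      exact ⟨⟨s, by rw [hneg s hs1, hs2]⟩, ⟨s, hs2⟩⟩
  have hrange : range β = range α := by
    ext x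
    constructor
    · rintro ⟨t, rfl⟩; exact hall t
    · rintro ⟨s, rfl⟩; exact ⟨ε * (s - s₀), (hαβ s).symm⟩
  refine ⟨γ, hGL, ⟨0, Or.inr int_α⟩, ?_⟩
  have key : range γ ∩ range β = α '' Iic 0 := by rw [hrange, int_α]
  rcases hε with h1 | h1
  · refine ⟨-s₀, Or.inr ?_⟩
    rw [key]
    ext x
    simp only [mem_image, mem_Iic, mem_Ici]
    constructor
    · rintro ⟨s, hs1, rfl⟩
      exact ⟨ε * (s - s₀), by rw [h1]; linarith, (hαβ s).symm⟩
    · rintro ⟨t, ht1, rfl⟩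
      exact ⟨s₀ + ε * t, by rw [h1]; linarith, (hβα t).symm⟩
  · refine ⟨s₀, Or.inl ?_⟩
    rw [key]
    ext x
    simp only [mem_image, mem_Iic, mem_Ici]
    constructor
    · rintro ⟨s, hs1, rfl⟩
      exact ⟨ε * (s - s₀), by rw [h1]; linarith, (hαβ s).symm⟩
    · rintro ⟨t, ht1, rfl⟩
      exact ⟨s₀ + ε * t, by rw [h1]; linarith, (hβα t).symm⟩

end CaseLine

section CaseRaySeg
variable {T : Type*} [MetricSpace T]

lemma case_ray (hT : IsRTree T) {α β : ℝ → T} (hα : GeodesicLine α) (hβ : GeodesicLine β)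
    {t₁ : ℝ} (hmem : β t₁ ∈ range α) (hlow : ∀ t, β t ∈ range α → t₁ ≤ t)
    (hup : ∀ t, t₁ ≤ t → β t ∈ range α) :
    ∃ γ : ℝ → T, GeodesicLine γ ∧
      (∃ a, range γ ∩ range α = α '' Ici a ∨ range γ ∩ range α = α '' Iic a) ∧
      (∃ b, range γ ∩ range β = β '' Ici b ∨ range γ ∩ range β = β '' Iic b) := by
  obtain ⟨s₁, hs₁⟩ := hmem
  obtain ⟨s', hs'⟩ := hup (t₁ + 1) (by linarith)
  obtain ⟨ε, hε, hs, hmid⟩ := seg_rigid hT hα hβ hs₁.symm hs'.symm (by linarith)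
  have hε2 : ε * ε = 1 := by rcases hε with h | h <;> rw [h] <;> norm_num
  have habsε : ∀ r : ℝ, |ε * r| = |r| := by
    intro r; rcases hε with h | h <;> rw [h] <;> simp
  have hβα : ∀ t, t₁ ≤ t → β t = α (s₁ + ε * (t - t₁)) := by
    intro t ht
    rcases le_or_gt t (t₁ + 1) with ht' | ht'
    · exact hmid t ht ht'
    · obtain ⟨st, hst⟩ := hup t (by linarith)
      obtain ⟨ε', hε', hs'', hmid'⟩ := seg_rigid hT hα hβ hs₁.symm hst.symm (by linarith)
      have h1 : β (t₁ + 1) = α (s₁ + ε' * ((t₁ + 1) - t₁)) := hmid' _ (by linarith) (by linarith)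
      have h2 : β (t₁ + 1) = α (s₁ + ε * ((t₁ + 1) - t₁)) := hmid _ (by linarith) (by linarith)
      have e1 : s₁ + ε' * ((t₁ + 1) - t₁) = s₁ + ε * ((t₁ + 1) - t₁) :=
        GL.inj hα (by rw [← h1, ← h2])
      have r1 : ε' * ((t₁ + 1) - t₁) = ε' := by ring
      have r2 : ε * ((t₁ + 1) - t₁) = ε := by ring
      have heps : ε' = ε := by linarith
      have := hmid' t (by linarith) (le_refl t)
      rw [this, heps]
  have hproj : ∀ t, t ≤ t₁ → ∀ s, dist (β t) (α s) = |s - s₁| + (t₁ - t) :=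
    fun t ht => exit_proj hT hα hβ hs₁.symm hlow ht
  set γ : ℝ → T := fun u => if u ≤ 0 then α (s₁ + ε * u) else β (t₁ - u) with hγ
  have hγ1 : ∀ u, u ≤ 0 → γ u = α (s₁ + ε * u) := by
    intro u hu; rw [hγ]; simp only [if_pos hu]
  have hγ2 : ∀ u, 0 < u → γ u = β (t₁ - u) := by
    intro u hu; rw [hγ]; simp only [if_neg (not_le.mpr hu)]
  have main : ∀ u v, u ≤ v → dist (γ u) (γ v) = v - u := by
    intro u v huv
    rcases le_or_gt v 0 with hv | hv
    · rw [hγ1 u (le_trans huv hv), hγ1 v hv, hα]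
      rw [show s₁ + ε * u - (s₁ + ε * v) = ε * (u - v) by ring, habsε,
        abs_of_nonpos (by linarith)]
      ring
    · rcases le_or_gt u 0 with hu | hu
      · rw [hγ1 u hu, hγ2 v hv, dist_comm]
        rw [hproj (t₁ - v) (by linarith) (s₁ + ε * u)]
        rw [show s₁ + ε * u - s₁ = ε * u by ring, habsε, abs_of_nonpos hu]
        ring
      · rw [hγ2 u hu, hγ2 v (by linarith), hβ]
        rw [show t₁ - u - (t₁ - v) = v - u by ring, abs_of_nonneg (by linarith)]
  have hGL : GeodesicLine γ := by
    intro s t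
    rcases le_total s t with h | h
    · rw [main s t h, abs_of_nonpos (by linarith)]; ring
    · rw [dist_comm, main t s h, abs_of_nonneg (by linarith)]
  refine ⟨γ, hGL, ?_, ⟨t₁, Or.inr ?_⟩⟩
  · have hsub : ∀ x, x ∈ range γ ∩ range α → ∃ u, u ≤ 0 ∧ α (s₁ + ε * u) = x := by
      rintro x ⟨⟨u, hu⟩, hxa⟩
      rcases le_or_gt u 0 with h | h
      · exact ⟨u, h, by rw [← hγ1 u h, hu]⟩
      · exfalso
        rw [hγ2 u h] at hu
        have := hlow (t₁ - u) (by rw [hu]; exact hxa)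
        linarith
    rcases hε with h1 | h1
    · refine ⟨s₁, Or.inr ?_⟩
      ext x
      simp only [mem_inter_iff, mem_range, mem_image, mem_Iic]
      constructor
      · intro hx
        obtain ⟨u, hu, hx'⟩ := hsub x hx
        exact ⟨s₁ + ε * u, by rw [h1]; linarith, hx'⟩
      · rintro ⟨s, hsle, rfl⟩
        refine ⟨⟨ε * (s - s₁), ?_⟩, ⟨s, rfl⟩⟩
        rw [hγ1 (ε * (s - s₁)) (by rw [h1]; linarith)]
        congr 1
        rw [show ε * (ε * (s - s₁)) = ε * ε * (s - s₁) by ring, hε2]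
        ring
    · refine ⟨s₁, Or.inl ?_⟩
      ext x
      simp only [mem_inter_iff, mem_range, mem_image, mem_Ici]
      constructor
      · intro hx
        obtain ⟨u, hu, hx'⟩ := hsub x hx
        exact ⟨s₁ + ε * u, by rw [h1]; linarith, hx'⟩
      · rintro ⟨s, hsle, rfl⟩
        refine ⟨⟨ε * (s - s₁), ?_⟩, ⟨s, rfl⟩⟩
        rw [hγ1 (ε * (s - s₁)) (by rw [h1]; linarith)]
        congr 1
        rw [show ε * (ε * (s - s₁)) = ε * ε * (s - s₁) by ring, hε2]
        ring
  · ext x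
    simp only [mem_inter_iff, mem_range, mem_image, mem_Iic]
    constructor
    · rintro ⟨⟨u, hu⟩, ⟨t, htx⟩⟩
      rcases le_or_gt u 0 with h | h
      · rw [hγ1 u h] at hu
        have htmem : t₁ ≤ t := hlow t (by rw [htx, ← hu]; exact ⟨s₁ + ε * u, rfl⟩)
        have hform := hβα t htmem
        have : s₁ + ε * u = s₁ + ε * (t - t₁) := by
          apply GL.inj hα
          rw [← hform, htx, ← hu]
        have hεu : ε * u = ε * (t - t₁) := by linarith
        have : u = t - t₁ := by
          have := congrArg (fun r => ε * r) hεu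
          change ε * (ε * u) = ε * (ε * (t - t₁)) at this
          rw [show ε * (ε * u) = ε * ε * u by ring, show ε * (ε * (t - t₁)) = ε * ε * (t - t₁) by ring,
            hε2, one_mul, one_mul] at this
          exact this
        have ht1 : t = t₁ := by linarith
        exact ⟨t, by linarith, htx⟩
      · rw [hγ2 u h] at hu
        exact ⟨t₁ - u, by linarith, by rw [hu]⟩
    · rintro ⟨t, ht1, rfl⟩
      refine ⟨⟨t₁ - t, ?_⟩, ⟨t, rfl⟩⟩
      rcases eq_or_lt_of_le ht1 with h | h
      · rw [hγ1 (t₁ - t) (by linarith), ← h]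
        rw [show s₁ + ε * (t - t) = s₁ by ring, hs₁, h]
      · rw [hγ2 (t₁ - t) (by linarith)]
        congr 1
        ring

lemma case_seg (hT : IsRTree T) {α β : ℝ → T} (hα : GeodesicLine α) (hβ : GeodesicLine β)
    {t₁ t₂ : ℝ} (htle : t₁ ≤ t₂) (hm1 : β t₁ ∈ range α) (hm2 : β t₂ ∈ range α)
    (hlow : ∀ t, β t ∈ range α → t₁ ≤ t) (hhigh : ∀ t, β t ∈ range α → t ≤ t₂) :
    ∃ γ : ℝ → T, GeodesicLine γ ∧
      (∃ a, range γ ∩ range α = α '' Ici a ∨ range γ ∩ range α = α '' Iic a) ∧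
      (∃ b, range γ ∩ range β = β '' Ici b ∨ range γ ∩ range β = β '' Iic b) := by
  obtain ⟨s₁, hs₁⟩ := hm1
  obtain ⟨s₂, hs₂⟩ := hm2
  obtain ⟨ε, hε, hmid⟩ : ∃ ε : ℝ, (ε = 1 ∨ ε = -1) ∧
      ∀ t, t₁ ≤ t → t ≤ t₂ → β t = α (s₂ + ε * (t - t₂)) := by
    rcases eq_or_lt_of_le htle with heq | hlt
    · refine ⟨1, Or.inl rfl, ?_⟩
      intro t h1 h2
      have ht : t = t₂ := by rw [← heq] at h2 ⊢; linarith
      rw [ht, ← hs₂]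
      norm_num
    · obtain ⟨ε, hε, hs, hmid⟩ := seg_rigid hT hα hβ hs₁.symm hs₂.symm hlt
      refine ⟨ε, hε, ?_⟩
      intro t h1 h2
      rw [hmid t h1 h2]
      congr 1
      rw [hs]
      ring
  have hε2 : ε * ε = 1 := by rcases hε with h | h <;> rw [h] <;> norm_num
  have habsε : ∀ r : ℝ, |ε * r| = |r| := by
    intro r; rcases hε with h | h <;> rw [h] <;> simp
  have hproj : ∀ t, t₂ ≤ t → ∀ s, dist (β t) (α s) = |s - s₂| + (t - t₂) :=
    fun t ht => exit_proj' hT hα hβ hs₂.symm hhigh ht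
  set γ : ℝ → T := fun u => if u ≤ t₂ then α (s₂ + ε * (u - t₂)) else β u with hγ
  have hγ1 : ∀ u, u ≤ t₂ → γ u = α (s₂ + ε * (u - t₂)) := by
    intro u hu; rw [hγ]; simp only [if_pos hu]
  have hγ2 : ∀ u, t₂ < u → γ u = β u := by
    intro u hu; rw [hγ]; simp only [if_neg (not_le.mpr hu)]
  have main : ∀ u v, u ≤ v → dist (γ u) (γ v) = v - u := by
    intro u v huv
    rcases le_or_gt v t₂ with hv | hv
    · rw [hγ1 u (le_trans huv hv), hγ1 v hv, hα]
      rw [show s₂ + ε * (u - t₂) - (s₂ + ε * (v - t₂)) = ε * (u - v) by ring, habsε,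
        abs_of_nonpos (by linarith)]
      ring
    · rcases le_or_gt u t₂ with hu | hu
      · rw [hγ1 u hu, hγ2 v hv, dist_comm]
        rw [hproj v (by linarith) (s₂ + ε * (u - t₂))]
        rw [show s₂ + ε * (u - t₂) - s₂ = ε * (u - t₂) by ring, habsε,
          abs_of_nonpos (by linarith)]
        ring
      · rw [hγ2 u hu, hγ2 v (by linarith), hβ, abs_of_nonpos (by linarith)]
        ring
  have hGL : GeodesicLine γ := by
    intro s t
    rcases le_total s t with h | h
    · rw [main s t h, abs_of_nonpos (by linarith)]; ring
    · rw [dist_comm, main t s h, abs_of_nonneg (by linarith)]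
  refine ⟨γ, hGL, ?_, ⟨t₁, Or.inl ?_⟩⟩
  · have hsub : ∀ x, x ∈ range γ ∩ range α → ∃ u, u ≤ t₂ ∧ α (s₂ + ε * (u - t₂)) = x := by
      rintro x ⟨⟨u, hu⟩, hxa⟩
      rcases le_or_gt u t₂ with h | h
      · exact ⟨u, h, by rw [← hγ1 u h, hu]⟩
      · exfalso
        rw [hγ2 u h] at hu
        have := hhigh u (by rw [hu]; exact hxa)
        linarith
    rcases hε with h1 | h1
    · refine ⟨s₂, Or.inr ?_⟩
      ext x
      simp only [mem_inter_iff, mem_range, mem_image, mem_Iic]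
      constructor
      · intro hx
        obtain ⟨u, hu, hx'⟩ := hsub x hx
        exact ⟨s₂ + ε * (u - t₂), by rw [h1]; linarith, hx'⟩
      · rintro ⟨s, hsle, rfl⟩
        refine ⟨⟨t₂ + ε * (s - s₂), ?_⟩, ⟨s, rfl⟩⟩
        rw [hγ1 (t₂ + ε * (s - s₂)) (by rw [h1]; linarith)]
        congr 1
        rw [show ε * (t₂ + ε * (s - s₂) - t₂) = ε * ε * (s - s₂) by ring, hε2]
        ring
    · refine ⟨s₂, Or.inl ?_⟩
      ext x
      simp only [mem_inter_iff, mem_range, mem_image, mem_Ici]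
      constructor
      · intro hx
        obtain ⟨u, hu, hx'⟩ := hsub x hx
        exact ⟨s₂ + ε * (u - t₂), by rw [h1]; linarith, hx'⟩
      · rintro ⟨s, hsle, rfl⟩
        refine ⟨⟨t₂ + ε * (s - s₂), ?_⟩, ⟨s, rfl⟩⟩
        rw [hγ1 (t₂ + ε * (s - s₂)) (by rw [h1]; linarith)]
        congr 1
        rw [show ε * (t₂ + ε * (s - s₂) - t₂) = ε * ε * (s - s₂) by ring, hε2]
        ring
  · ext x
    simp only [mem_inter_iff, mem_range, mem_image, mem_Ici]
    constructor
    · rintro ⟨⟨u, hu⟩, ⟨t, htx⟩⟩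
      rcases le_or_gt u t₂ with h | h
      · have htmem : t₁ ≤ t := hlow t (by rw [htx, ← hu, hγ1 u h]; exact ⟨s₂ + ε * (u - t₂), rfl⟩)
        exact ⟨t, htmem, htx⟩
      · rw [hγ2 u h] at hu
        exact ⟨u, by linarith, by rw [hu]⟩
    · rintro ⟨t, ht1, rfl⟩
      refine ⟨⟨t, ?_⟩, ⟨t, rfl⟩⟩
      rcases le_or_gt t t₂ with h | h
      · rw [hγ1 t h]
        exact (hmid t ht1 h).symm
      · rw [hγ2 t h]
end CaseRaySeg

section Assemble
variable {T : Type*} [MetricSpace T]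

lemma main_aux (hT : IsRTree T) (hbr : EverywhereBranching T) {α β : ℝ → T}
    (hα : GeodesicLine α) (hβ : GeodesicLine β)
    (himp : BddAbove {t | β t ∈ range α} → BddBelow {t | β t ∈ range α}) :
    ∃ γ : ℝ → T, GeodesicLine γ ∧
      (∃ a, range γ ∩ range α = α '' Ici a ∨ range γ ∩ range α = α '' Iic a) ∧
      (∃ b, range γ ∩ range β = β '' Ici b ∨ range γ ∩ range β = β '' Iic b) := by
  set S := {t | β t ∈ range α} with hSdef
  by_cases hne : S.Nonempty
  · have hclosed : IsClosed S := (GL.closed_range hα).preimage (GL.cont hβ)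
    by_cases hbb : BddBelow S
    · have ht₁S : sInf S ∈ S := IsClosed.csInf_mem hclosed hne hbb
      have hlow : ∀ t, β t ∈ range α → sInf S ≤ t := fun t ht => csInf_le hbb ht
      by_cases hba : BddAbove S
      · have ht₂S : sSup S ∈ S := IsClosed.csSup_mem hclosed hne hba
        have hhigh : ∀ t, β t ∈ range α → t ≤ sSup S := fun t ht => le_csSup hba ht
        exact case_seg hT hα hβ (hlow _ ht₂S) ht₁S ht₂S hlow hhigh
      · have hup : ∀ t, sInf S ≤ t → β t ∈ range α := by
          intro t ht
          obtain ⟨t', ht'S, htt'⟩ := not_bddAbove_iff.mp hba t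
          exact contact_interval hT hα hβ ht₁S ht'S ht (le_of_lt htt')
        exact case_ray hT hα hβ ht₁S hlow hup
    · have hba : ¬ BddAbove S := fun h => hbb (himp h)
      have hall : ∀ t : ℝ, β t ∈ range α := by
        intro t
        obtain ⟨t', ht'S, htt'⟩ := not_bddAbove_iff.mp hba t
        obtain ⟨t'', ht''S, htt''⟩ := not_bddBelow_iff.mp hbb t
        exact contact_interval hT hα hβ ht''S ht'S (le_of_lt htt'') (le_of_lt htt')
      exact case_line hT hbr hα hβ hall
  · have hS : ∀ t, β t ∉ range α := by
      intro t ht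
      exact hne ⟨t, ht⟩
    exact case_disjoint hT hα hβ hS

theorem third_flat_aux (hT : IsRTree T) (hbr : EverywhereBranching T) (α β : ℝ → T)
    (hα : GeodesicLine α) (hβ : GeodesicLine β) :
    ∃ γ : ℝ → T, GeodesicLine γ ∧
      (∃ a : ℝ, range γ ∩ range α = α '' Ici a ∨ range γ ∩ range α = α '' Iic a) ∧
      (∃ b : ℝ, range γ ∩ range β = β '' Ici b ∨ range γ ∩ range β = β '' Iic b) := by
  by_cases hbb : BddBelow {t | β t ∈ range α}
  · exact main_aux hT hbr hα hβ (fun _ => hbb)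
  · by_cases hba : BddAbove {t | β t ∈ range α}
    · set β' : ℝ → T := fun t => β (-t) with hβ'
      have hβ'GL : GeodesicLine β' := GL.neg hβ
      obtain ⟨M, hM⟩ := hba
      have himp : BddAbove {t | β' t ∈ range α} → BddBelow {t | β' t ∈ range α} := by
        intro _
        refine ⟨-M, ?_⟩
        intro t ht
        have : (-t) ∈ {t | β t ∈ range α} := ht
        have := hM this
        linarith
      obtain ⟨γ, hGL, ha, b, hb⟩ := main_aux hT hbr hα hβ'GL himp
      refine ⟨γ, hGL, ha, ?_⟩
      have hrange : range β' = range β := by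
        ext x
        constructor
        · rintro ⟨t, rfl⟩; exact ⟨-t, rfl⟩
        · rintro ⟨t, rfl⟩; exact ⟨-t, by simp [hβ']⟩
      rcases hb with hb | hb
      · refine ⟨-b, Or.inr ?_⟩
        rw [← hrange, hb]
        ext x
        simp only [mem_image, mem_Ici, mem_Iic]
        constructor
        · rintro ⟨t, ht, rfl⟩
          exact ⟨-t, by linarith, rfl⟩
        · rintro ⟨t, ht, rfl⟩
          exact ⟨-t, by linarith, by simp [hβ']⟩
      · refine ⟨-b, Or.inl ?_⟩
        rw [← hrange, hb]
        ext x
        simp only [mem_image, mem_Ici, mem_Iic]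
        constructor
        · rintro ⟨t, ht, rfl⟩
          exact ⟨-t, by linarith, rfl⟩
        · rintro ⟨t, ht, rfl⟩
          exact ⟨-t, by linarith, by simp [hβ']⟩
    · exact main_aux hT hbr hα hβ (fun h => absurd h hba)

end Assemble


/-- In `F = T × ℝ` (ℓ² metric) over an everywhere-branching `ℝ`-tree `T`,
for any two 2-flats `α × ℝ` and `β × ℝ` there is a third 2-flat `γ × ℝ` meeting each of
them in a half-plane, i.e. `γ` meets each of `α`, `β` in a ray. -/
theorem third_flat_meeting_two_flats_in_halfPlanes
    {T : Type*} [MetricSpace T] (hT : IsRTree T) (hbr : EverywhereBranching T)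
    (α β : ℝ → T) (hα : GeodesicLine α) (hβ : GeodesicLine β) :
    ∃ γ : ℝ → T, GeodesicLine γ ∧
      (∃ a : ℝ, range γ ∩ range α = α '' Ici a ∨ range γ ∩ range α = α '' Iic a) ∧
      (∃ b : ℝ, range γ ∩ range β = β '' Ici b ∨ range γ ∩ range β = β '' Iic b) :=
  third_flat_aux hT hbr α β hα hβ
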